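/- (Farkas' lemma) Let M be an m × n real matrix and b ∈ ℝ^m. Then exactly one of the following holds: (i) there exists x ∈ ℝ^n with all components nonnegative such that M x = b; (ii) there exists y ∈ ℝ^m such that every component of Mᵀ y is nonnegative and b · y < 0. -/

import Mathlib

open Matrix

/-- Conic Carathéodory: a nonnegative combination of vectors indexed by `s` can be rewritten
as a nonnegative combination over a subset `t ⊆ s` on which the vectors are linearly
independent. -/
theorem cone_caratheodory {V : Type*} [AddCommGroup V] [Module ℝ V] {ι : Type*} [DecidableEq ι]
    (v : ι → V) (s : Finset ι) (c : ι → ℝ) (hc : ∀ i ∈ s, 0 ≤ c i) :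
    ∃ t ⊆ s, LinearIndependent ℝ (fun i : t => v i) ∧
      ∃ d : ι → ℝ, (∀ i ∈ t, 0 ≤ d i) ∧ ∑ i ∈ t, d i • v i = ∑ i ∈ s, c i • v i := by
  classical
  induction s using Finset.strongInduction generalizing c with
  | _ s ih =>
    by_cases hind : LinearIndependent ℝ (fun i : s => v i)
    · exact ⟨s, Finset.Subset.refl s, hind, c, hc, rfl⟩
    · rw [Fintype.not_linearIndependent_iff] at hind
      obtain ⟨g, hg0, i₁, hi₁⟩ := hind
      -- the key step, assuming WLOG that some coefficient of the relation is positive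
      have key : ∀ w : ι → ℝ, (∑ i ∈ s, w i • v i = 0) → (∃ i ∈ s, 0 < w i) →
          ∃ t ⊆ s, LinearIndependent ℝ (fun i : t => v i) ∧
            ∃ d : ι → ℝ, (∀ i ∈ t, 0 ≤ d i) ∧ ∑ i ∈ t, d i • v i = ∑ i ∈ s, c i • v i := by
        intro w hw0 ⟨ip, hips, hipw⟩
        set P : Finset ι := s.filter (fun i => 0 < w i) with hP
        have hPne : P.Nonempty := ⟨ip, Finset.mem_filter.2 ⟨hips, hipw⟩⟩
        obtain ⟨i₀, hi₀P, hmin⟩ := P.exists_min_image (fun i => c i / w i) hPne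
        have hi₀s : i₀ ∈ s := (Finset.mem_filter.1 hi₀P).1
        have hwi₀ : 0 < w i₀ := (Finset.mem_filter.1 hi₀P).2
        set r : ℝ := c i₀ / w i₀ with hr
        have hr0 : 0 ≤ r := div_nonneg (hc i₀ hi₀s) hwi₀.le
        set c' : ι → ℝ := fun i => c i - r * w i with hc'
        have hc'nonneg : ∀ i ∈ s, 0 ≤ c' i := by
          intro i his
          by_cases hwi : 0 < w i
          · have hiP : i ∈ P := Finset.mem_filter.2 ⟨his, hwi⟩
            have := hmin i hiP
            have : r * w i ≤ c i := (le_div_iff₀ hwi).1 this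
            simpa [hc'] using sub_nonneg.2 this
          · push_neg at hwi
            have : r * w i ≤ 0 := mul_nonpos_of_nonneg_of_nonpos hr0 hwi
            have := hc i his
            simp only [hc', sub_nonneg]
            linarith
        have hc'i₀ : c' i₀ = 0 := by
          simp [hc', hr, div_mul_cancel₀ _ (ne_of_gt hwi₀)]
        have hsum' : ∑ i ∈ s, c' i • v i = ∑ i ∈ s, c i • v i := by
          simp only [hc', sub_smul, Finset.sum_sub_distrib, ← smul_smul]
          rw [← Finset.smul_sum, hw0, smul_zero, sub_zero]
        have hsum'' : ∑ i ∈ s.erase i₀, c' i • v i = ∑ i ∈ s, c i • v i := by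
          rw [Finset.sum_erase _ (by rw [hc'i₀, zero_smul]), hsum']
        obtain ⟨t, hts, hind, d, hd, hdsum⟩ :=
          ih (s.erase i₀) (Finset.erase_ssubset hi₀s) c' (fun i hi => hc'nonneg i (Finset.mem_of_mem_erase hi))
        exact ⟨t, hts.trans (Finset.erase_subset _ _), hind, d, hd, by rw [hdsum, hsum'']⟩
      -- build the relation coefficients on `ι`
      set w : ι → ℝ := fun i => if h : i ∈ s then g ⟨i, h⟩ else 0 with hwdef
      have hwsum : ∑ i ∈ s, w i • v i = 0 := by
        rw [← Finset.sum_attach s (fun i => w i • v i), ← hg0, Finset.univ_eq_attach]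
        exact Finset.sum_congr rfl fun x _ => by simp [hwdef, x.2]
      have hwi₁ : w ↑i₁ = g i₁ := by simp [hwdef, i₁.2]
      rcases hi₁.lt_or_gt with hneg | hpos
      · refine key (-w) ?_ ⟨i₁, i₁.2, by simp [hwi₁]; linarith⟩
        simp only [Pi.neg_apply, neg_smul]
        rw [Finset.sum_neg_distrib, hwsum, neg_zero]
      · exact key w hwsum ⟨i₁, i₁.2, by rw [hwi₁]; exact hpos⟩

/-- The cone generated by finitely many linearly independent vectors is closed. -/
theorem isClosed_simplicialCone {E : Type*} [NormedAddCommGroup E] [NormedSpace ℝ E]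
    {ι : Type*} [Fintype ι] (v : ι → E) (hv : LinearIndependent ℝ v) :
    IsClosed {b : E | ∃ c : ι → ℝ, (∀ i, 0 ≤ c i) ∧ ∑ i, c i • v i = b} := by
  classical
  let L : (ι → ℝ) →ₗ[ℝ] E :=
    { toFun := fun c => ∑ i, c i • v i
      map_add' := fun a b => by simp [add_smul, Finset.sum_add_distrib]
      map_smul' := fun r a => by simp [smul_smul, Finset.smul_sum]
      }
  have hker : LinearMap.ker L = ⊥ := by
    rw [LinearMap.ker_eq_bot']
    intro c hcz
    exact funext (Fintype.linearIndependent_iff.1 hv c hcz)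
  have hemb := LinearMap.isClosedEmbedding_of_injective hker
  have horth : IsClosed {c : ι → ℝ | ∀ i, 0 ≤ c i} := by
    have : {c : ι → ℝ | ∀ i, 0 ≤ c i} = ⋂ i, (fun c : ι → ℝ => c i) ⁻¹' Set.Ici 0 := by
      ext c; simp [Set.mem_iInter]
    rw [this]
    exact isClosed_iInter fun i => IsClosed.preimage (continuous_apply i) isClosed_Ici
  have himg : {b : E | ∃ c : ι → ℝ, (∀ i, 0 ≤ c i) ∧ ∑ i, c i • v i = b} =
      L '' {c : ι → ℝ | ∀ i, 0 ≤ c i} := by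
    ext b
    constructor
    · rintro ⟨c, hc, rfl⟩; exact ⟨c, hc, rfl⟩
    · rintro ⟨c, hc, rfl⟩; exact ⟨c, hc, rfl⟩
  rw [himg]
  exact hemb.isClosedMap _ horth

theorem isClosed_mulVec_cone (m n : ℕ) (M : Matrix (Fin m) (Fin n) ℝ) :
    IsClosed {b : EuclideanSpace ℝ (Fin m) |
      ∃ x : Fin n → ℝ, (∀ i, 0 ≤ x i) ∧ WithLp.toLp 2 (M.mulVec x) = b} := by
  classical
  set v : Fin n → EuclideanSpace ℝ (Fin m) := fun j => WithLp.toLp 2 (fun i => M i j) with hv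
  have hsum : ∀ x : Fin n → ℝ, (WithLp.toLp 2 (M.mulVec x) : EuclideanSpace ℝ (Fin m)) = ∑ j, x j • v j := by
    intro x
    ext i
    simp only [Matrix.mulVec, dotProduct, PiLp.toLp_apply, WithLp.ofLp_sum, WithLp.ofLp_smul]
    rw [Finset.sum_apply]
    exact Finset.sum_congr rfl fun j _ => by simp [hv, mul_comm]
  have hunion : {b : EuclideanSpace ℝ (Fin m) | ∃ x : Fin n → ℝ, (∀ i, 0 ≤ x i) ∧ WithLp.toLp 2 (M.mulVec x) = b} =
      ⋃ t ∈ {t : Finset (Fin n) | LinearIndependent ℝ (fun j : t => v j)},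
        {b : EuclideanSpace ℝ (Fin m) | ∃ c : t → ℝ, (∀ j, 0 ≤ c j) ∧ ∑ j : t, c j • v j = b} := by
    ext b
    simp only [Set.mem_setOf_eq, Set.mem_iUnion, exists_prop]
    constructor
    · rintro ⟨x, hx, rfl⟩
      obtain ⟨t, -, hind, d, hd, hdsum⟩ :=
        cone_caratheodory v Finset.univ x (fun i _ => hx i)
      refine ⟨t, hind, fun j => d j, fun j => hd j j.2, ?_⟩
      rw [Finset.sum_coe_sort t (fun i => d i • v i), hdsum, hsum]
    · rintro ⟨t, hind, c, hc, rfl⟩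
      set x : Fin n → ℝ := fun j => if h : j ∈ t then c ⟨j, h⟩ else 0 with hx
      refine ⟨x, fun j => by by_cases h : j ∈ t <;> simp [hx, h, hc], ?_⟩
      rw [hsum,
        show (∑ j : Fin n, x j • v j) = ∑ j ∈ t, x j • v j from
          (Finset.sum_subset (Finset.subset_univ t) fun j _ hj => by simp [hx, hj]).symm,
        ← Finset.sum_coe_sort t (fun i => x i • v i)]
      exact Finset.sum_congr rfl fun j _ => by simp [hx, j.2]
  rw [hunion]
  exact Set.Finite.isClosed_biUnion (Set.toFinite _)
    (fun t ht => isClosed_simplicialCone _ ht)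

open scoped InnerProductSpace

/-- **Farkas' lemma.** For a real `m × n` matrix `M` and `b ∈ ℝ^m`, exactly one of the
following holds: (i) `Mx = b` has a componentwise-nonnegative solution `x`;
(ii) there is `y ∈ ℝ^m` with `Mᵀy ≥ 0` componentwise and `b · y < 0`. -/
theorem farkas_lemma (m n : ℕ) (M : Matrix (Fin m) (Fin n) ℝ) (b : Fin m → ℝ) :
    Xor' (∃ x : Fin n → ℝ, (∀ i, 0 ≤ x i) ∧ M.mulVec x = b)
      (∃ y : Fin m → ℝ, (∀ j, 0 ≤ Mᵀ.mulVec y j) ∧ b ⬝ᵥ y < 0) := by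
  classical
  have hdot : ∀ (x : Fin n → ℝ) (y : Fin m → ℝ), M.mulVec x ⬝ᵥ y = x ⬝ᵥ Mᵀ.mulVec y := by
    intro x y
    rw [dotProduct_comm (M.mulVec x) y, Matrix.dotProduct_mulVec,
      Matrix.mulVec_transpose, dotProduct_comm x]
  have hboth : ¬ ((∃ x : Fin n → ℝ, (∀ i, 0 ≤ x i) ∧ M.mulVec x = b) ∧
      (∃ y : Fin m → ℝ, (∀ j, 0 ≤ Mᵀ.mulVec y j) ∧ b ⬝ᵥ y < 0)) := by
    rintro ⟨⟨x, hx, rfl⟩, ⟨y, hy, hby⟩⟩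
    rw [hdot] at hby
    exact absurd (Finset.sum_nonneg fun j _ => mul_nonneg (hx j) (hy j)) (not_le.2 hby)
  by_cases h1 : ∃ x : Fin n → ℝ, (∀ i, 0 ≤ x i) ∧ M.mulVec x = b
  · exact Or.inl ⟨h1, fun h2 => hboth ⟨h1, h2⟩⟩
  · refine Or.inr ⟨?_, h1⟩
    let K : ProperCone ℝ (EuclideanSpace ℝ (Fin m)) :=
      { carrier := {b' : EuclideanSpace ℝ (Fin m) | ∃ x, (∀ i, 0 ≤ x i) ∧ WithLp.toLp 2 (M.mulVec x) = b'}
        smul_mem' := by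
          rintro r b' ⟨x, hx, rfl⟩
          exact ⟨(r : ℝ) • x, fun i => mul_nonneg r.2 (hx i), by
            rw [M.mulVec_smul]; rfl⟩
        add_mem' := by
          rintro b' b'' ⟨x, hx, rfl⟩ ⟨x', hx', rfl⟩
          exact ⟨x + x', fun i => add_nonneg (hx i) (hx' i), by rw [M.mulVec_add]; rfl⟩
        zero_mem' := ⟨0, fun i => le_refl 0, by rw [M.mulVec_zero]; rfl⟩
        isClosed' := isClosed_mulVec_cone m n M }
    have hb : (WithLp.toLp 2 b : EuclideanSpace ℝ (Fin m)) ∉ K := by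
      rintro ⟨x, hx, hxb⟩
      exact h1 ⟨x, hx, by simpa using congrArg WithLp.ofLp hxb⟩
    obtain ⟨y, hy1, hy2⟩ :=
      K.hyperplane_separation' hb
    have hinner : ∀ a c : EuclideanSpace ℝ (Fin m), ⟪a, c⟫_ℝ = ∑ i, a i * c i := by
      intro a c
      simp [PiLp.inner_apply, RCLike.inner_apply, mul_comm]
    refine ⟨y.ofLp, fun j => ?_, ?_⟩
    · have hmem : (WithLp.toLp 2 (M.mulVec (Pi.single j 1)) : EuclideanSpace ℝ (Fin m)) ∈ K :=
        ⟨Pi.single j 1, fun i => by by_cases h : i = j <;> simp [Pi.single_apply, h], rfl⟩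
      have h0 := hy1 _ hmem
      rw [hinner] at h0
      refine le_trans h0 (le_of_eq ?_)
      simp only [PiLp.toLp_apply, Matrix.mulVec, dotProduct, Matrix.transpose_apply, Pi.single_apply,
        mul_ite, mul_one, mul_zero, Finset.sum_ite_eq']
      simp
    · have := hy2
      rw [hinner] at this
      simpa [dotProduct, mul_comm] using this
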